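/- Davis–Kahan consequence combined with a norm bound: let A, B be real symmetric n×n matrices with ‖A − B‖ ≤ c, eigenvalues α_1 ≥ ... ≥ α_n of A with unit eigenvectors a_i, and eigenvalues β_1 ≥ ... ≥ β_n of B with unit eigenvectors b_i. If θ_i denotes the angle between the spans of a_i and b_i and min{|β_{i−1} − α_i|, |β_{i+1} − α_i|} > 0, then sin θ_i ≤ c / min{|β_{i−1} − α_i|, |β_{i+1} − α_i|}. -/

import Mathlib

open Matrix BigOperators

/-- Operator 2-norm of a real square matrix. -/
noncomputable def opNorm {n : ℕ} (M : Matrix (Fin n) (Fin n) ℝ) : ℝ :=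
  ‖Matrix.toEuclideanCLM (𝕜 := ℝ) M‖

/-- Spectral radius of a real square matrix. -/
noncomputable def specRad {n : ℕ} (M : Matrix (Fin n) (Fin n) ℝ) : ℝ :=
  sSup {r : ℝ | ∃ μ ∈ spectrum ℝ M, r = |μ|}

/-- Off-diagonal (adjacency) part of a matrix. -/
def adjPart {n : ℕ} (M : Matrix (Fin n) (Fin n) ℝ) : Matrix (Fin n) (Fin n) ℝ :=
  Matrix.of fun i j => if i = j then 0 else M i j

/-- Laplacian built from the off-diagonal part of `M`. -/
def lap {n : ℕ} (M : Matrix (Fin n) (Fin n) ℝ) : Matrix (Fin n) (Fin n) ℝ :=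
  Matrix.diagonal (fun i => ∑ j, adjPart M i j) - adjPart M

/-- Maximum absolute row sum (∞-norm). -/
noncomputable def rowSumNorm {n : ℕ} (M : Matrix (Fin n) (Fin n) ℝ) : ℝ :=
  ⨆ i, ∑ j, |M i j|

/-- Maximum absolute column sum (1-norm). -/
noncomputable def colSumNorm {n : ℕ} (M : Matrix (Fin n) (Fin n) ℝ) : ℝ :=
  ⨆ j, ∑ i, |M i j|

/-- `α` lists the eigenvalues of a Hermitian matrix in decreasing order. -/
def IsEigList {n : ℕ} {M : Matrix (Fin n) (Fin n) ℝ} (hM : M.IsHermitian)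
    (α : Fin n → ℝ) : Prop :=
  Antitone α ∧ ∃ σ : Equiv.Perm (Fin n), α = hM.eigenvalues ∘ σ

/-- Loewner order: `B - A` is positive semidefinite. -/
def PSDle {n : ℕ} (A B : Matrix (Fin n) (Fin n) ℝ) : Prop := (B - A).PosSemidef


section DKAux
open scoped RealInnerProductSpace
variable {n : ℕ}
local notation "Euc" => EuclideanSpace ℝ (Fin n)

lemma mv_apply (M : Matrix (Fin n) (Fin n) ℝ) (x : Euc) (j : Fin n) :
    Matrix.toEuclideanLin M x j = M.mulVec x j := rfl

lemma norm_mv_le (M : Matrix (Fin n) (Fin n) ℝ) (x : Euc) :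
    ‖Matrix.toEuclideanLin M x‖ ≤ opNorm M * ‖x‖ := by
  have : Matrix.toEuclideanLin M x = Matrix.toEuclideanCLM (𝕜 := ℝ) M x := by
    rw [← Matrix.coe_toEuclideanCLM_eq_toEuclideanLin]; rfl
  rw [this]
  exact (Matrix.toEuclideanCLM (𝕜 := ℝ) M).le_opNorm x

lemma mv_symm {M : Matrix (Fin n) (Fin n) ℝ} (hM : M.IsHermitian) (x y : Euc) :
    ⟪Matrix.toEuclideanLin M x, y⟫ = ⟪x, Matrix.toEuclideanLin M y⟫ :=
  (Matrix.isHermitian_iff_isSymmetric.1 hM) x y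

lemma mv_eigen {M : Matrix (Fin n) (Fin n) ℝ} (hM : M.IsHermitian) (k : Fin n) :
    Matrix.toEuclideanLin M (hM.eigenvectorBasis k) = hM.eigenvalues k • hM.eigenvectorBasis k := by
  apply (WithLp.equiv 2 (Fin n → ℝ)).injective
  ext j
  simpa [mv_apply] using congrFun (hM.mulVec_eigenvectorBasis k) j

lemma inner_mv (M : Matrix (Fin n) (Fin n) ℝ) (hM : M.IsHermitian) (k : Fin n) (x : Euc) :
    ⟪hM.eigenvectorBasis k, Matrix.toEuclideanLin M x⟫
      = hM.eigenvalues k * ⟪hM.eigenvectorBasis k, x⟫ := by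
  rw [← mv_symm hM, mv_eigen hM, real_inner_smul_left]

lemma parseval (z : OrthonormalBasis (Fin n) ℝ Euc) (x : Euc) :
    ∑ k, ⟪z k, x⟫ ^ 2 = ‖x‖ ^ 2 := by
  have h := z.sum_inner_mul_inner x x
  simp_rw [real_inner_comm x] at h
  rw [← real_inner_self_eq_norm_sq, ← h]
  congr 1; ext k; rw [real_inner_comm]; ring

lemma coeff_zero_of_mem_span (z : OrthonormalBasis (Fin n) ℝ Euc) (s : Set (Fin n)) (x : Euc)
    (hx : x ∈ Submodule.span ℝ (z '' s)) (k : Fin n) (hk : k ∉ s) : ⟪z k, x⟫ = 0 := by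
  induction hx using Submodule.span_induction with
  | mem y hy =>
    obtain ⟨m, hm, rfl⟩ := hy
    exact z.orthonormal.2 (fun h => hk (h ▸ hm))
  | zero => exact inner_zero_right _
  | add y w _ _ hy hw => rw [inner_add_right, hy, hw, add_zero]
  | smul r y _ hy => rw [real_inner_smul_right, hy, mul_zero]

lemma finrank_span_onb (z : OrthonormalBasis (Fin n) ℝ Euc) (s : Finset (Fin n)) :
    Module.finrank ℝ (Submodule.span ℝ (z '' (s : Set (Fin n)))) = s.card := by
  have hli : LinearIndependent ℝ (fun k : (s : Set (Fin n)) => z k) :=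
    (z.orthonormal.comp _ Subtype.val_injective).linearIndependent
  have himg : z '' (s : Set (Fin n)) = Set.range (fun k : (s : Set (Fin n)) => z k) :=
    (Set.image_eq_range _ _)
  rw [himg, finrank_span_eq_card hli]
  simp

lemma exists_ne_zero_mem_inf (U W : Submodule ℝ Euc)
    (h : n < Module.finrank ℝ U + Module.finrank ℝ W) : ∃ x : Euc, x ∈ U ⊓ W ∧ x ≠ 0 := by
  have hn : Module.finrank ℝ Euc = n := by simp
  have hsup : Module.finrank ℝ (U ⊔ W : Submodule ℝ Euc) ≤ n := by
    calc Module.finrank ℝ (U ⊔ W : Submodule ℝ Euc) ≤ Module.finrank ℝ Euc :=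
          Submodule.finrank_le _
    _ = n := hn
  have hkey := Submodule.finrank_sup_add_finrank_inf_eq U W
  have hpos : 0 < Module.finrank ℝ (U ⊓ W : Submodule ℝ Euc) := by omega
  have : Nontrivial (U ⊓ W : Submodule ℝ Euc) := Module.finrank_pos_iff.mp hpos
  obtain ⟨⟨x, hx⟩, hne⟩ := exists_ne (0 : (U ⊓ W : Submodule ℝ Euc))
  exact ⟨x, hx, fun h0 => hne (by simp [h0, Submodule.mk_eq_zero])⟩

lemma quadform {M : Matrix (Fin n) (Fin n) ℝ} (hM : M.IsHermitian) (x : Euc) :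
    ⟪x, Matrix.toEuclideanLin M x⟫ = ∑ k, hM.eigenvalues k * ⟪hM.eigenvectorBasis k, x⟫ ^ 2 := by
  rw [← (hM.eigenvectorBasis).sum_inner_mul_inner x (Matrix.toEuclideanLin M x)]
  congr 1; ext k
  rw [inner_mv M hM, real_inner_comm x]; ring

lemma weyl_one (A B : Matrix (Fin n) (Fin n) ℝ) (hA : A.IsHermitian) (hB : B.IsHermitian)
    (α β : Fin n → ℝ) (hα : IsEigList hA α) (hβ : IsEigList hB β) (j : Fin n) :
    α j - β j ≤ opNorm (A - B) := by
  obtain ⟨hαm, σA, hσA⟩ := hα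
  obtain ⟨hβm, σB, hσB⟩ := hβ
  set zA := hA.eigenvectorBasis
  set zB := hB.eigenvectorBasis
  set sA : Finset (Fin n) := (Finset.Iic j).image σA with hsA
  set sB : Finset (Fin n) := (Finset.Ici j).image σB with hsB
  set U : Submodule ℝ Euc := Submodule.span ℝ (zA '' (sA : Set (Fin n)))
  set W : Submodule ℝ Euc := Submodule.span ℝ (zB '' (sB : Set (Fin n)))
  have hcard : n < Module.finrank ℝ U + Module.finrank ℝ W := by
    rw [finrank_span_onb, finrank_span_onb, hsA, hsB,
      Finset.card_image_of_injective _ σA.injective,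
      Finset.card_image_of_injective _ σB.injective, Fin.card_Iic, Fin.card_Ici]
    have := j.isLt
    omega
  obtain ⟨x, ⟨hxU, hxW⟩, hx0⟩ := exists_ne_zero_mem_inf U W hcard
  have hnx : (0:ℝ) < ‖x‖ ^ 2 := by
    have := norm_pos_iff.mpr hx0
    positivity
  have hbA : α j * ‖x‖ ^ 2 ≤ ⟪x, Matrix.toEuclideanLin A x⟫ := by
    rw [quadform hA, ← parseval zA x, Finset.mul_sum]
    apply Finset.sum_le_sum
    intro k _
    by_cases hk : k ∈ sA
    · obtain ⟨m, hm, rfl⟩ := Finset.mem_image.mp hk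
      have : α m = hA.eigenvalues (σA m) := congrFun hσA m
      rw [← this]
      exact mul_le_mul_of_nonneg_right (hαm (Finset.mem_Iic.mp hm)) (sq_nonneg _)
    · rw [coeff_zero_of_mem_span zA _ x hxU k (by simpa using hk)]
      simp
  have hbB : ⟪x, Matrix.toEuclideanLin B x⟫ ≤ β j * ‖x‖ ^ 2 := by
    rw [quadform hB, ← parseval zB x, Finset.mul_sum]
    apply Finset.sum_le_sum
    intro k _
    by_cases hk : k ∈ sB
    · obtain ⟨m, hm, rfl⟩ := Finset.mem_image.mp hk
      have : β m = hB.eigenvalues (σB m) := congrFun hσB m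
      rw [← this]
      exact mul_le_mul_of_nonneg_right (hβm (Finset.mem_Ici.mp hm)) (sq_nonneg _)
    · rw [coeff_zero_of_mem_span zB _ x hxW k (by simpa using hk)]
      simp
  have hsub : ⟪x, Matrix.toEuclideanLin A x⟫ - ⟪x, Matrix.toEuclideanLin B x⟫
      = ⟪x, Matrix.toEuclideanLin (A - B) x⟫ := by
    rw [map_sub]
    rw [LinearMap.sub_apply, inner_sub_right]
  have hcs : ⟪x, Matrix.toEuclideanLin (A - B) x⟫ ≤ opNorm (A - B) * ‖x‖ ^ 2 := by
    calc ⟪x, Matrix.toEuclideanLin (A - B) x⟫ ≤ ‖x‖ * ‖Matrix.toEuclideanLin (A - B) x‖ :=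
          real_inner_le_norm _ _
    _ ≤ ‖x‖ * (opNorm (A - B) * ‖x‖) := by
        exact mul_le_mul_of_nonneg_left (norm_mv_le _ _) (norm_nonneg _)
    _ = opNorm (A - B) * ‖x‖ ^ 2 := by ring
  have : (α j - β j) * ‖x‖ ^ 2 ≤ opNorm (A - B) * ‖x‖ ^ 2 := by
    calc (α j - β j) * ‖x‖ ^ 2 = α j * ‖x‖ ^ 2 - β j * ‖x‖ ^ 2 := by ring
    _ ≤ ⟪x, Matrix.toEuclideanLin A x⟫ - ⟪x, Matrix.toEuclideanLin B x⟫ := by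
        exact sub_le_sub hbA hbB
    _ ≤ opNorm (A - B) * ‖x‖ ^ 2 := hsub ▸ hcs
  exact le_of_mul_le_mul_right this hnx

lemma opNorm_sub_comm (A B : Matrix (Fin n) (Fin n) ℝ) : opNorm (A - B) = opNorm (B - A) := by
  unfold opNorm
  rw [show A - B = -(B - A) from (neg_sub B A).symm, map_neg, norm_neg]

lemma weyl (A B : Matrix (Fin n) (Fin n) ℝ) (hA : A.IsHermitian) (hB : B.IsHermitian)
    (α β : Fin n → ℝ) (hα : IsEigList hA α) (hβ : IsEigList hB β) (j : Fin n) :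
    |α j - β j| ≤ opNorm (A - B) := by
  rw [abs_sub_le_iff]
  exact ⟨weyl_one A B hA hB α β hα hβ j,
    (opNorm_sub_comm A B) ▸ weyl_one B A hB hA β α hβ hα j⟩

end DKAux

open scoped RealInnerProductSpace in
theorem davis_kahan {n : ℕ} (A B : Matrix (Fin n) (Fin n) ℝ) (c : ℝ)
    (hA : A.IsHermitian) (hB : B.IsHermitian) (hAB : opNorm (A - B) ≤ c)
    (α β : Fin n → ℝ) (a b : Fin n → Fin n → ℝ)
    (hα : IsEigList hA α) (hβ : IsEigList hB β)
    (ha : ∀ i, A.mulVec (a i) = α i • a i) (hanorm : ∀ i, ∑ j, a i j ^ 2 = 1)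
    (hb : ∀ i, B.mulVec (b i) = β i • b i) (hbnorm : ∀ i, ∑ j, b i j ^ 2 = 1)
    (i : Fin n) (gap : ℝ) (hgap : 0 < gap)
    (hgap1 : ∀ j : Fin n, (j : ℕ) + 1 = (i : ℕ) → gap ≤ |β j - α i|)
    (hgap2 : ∀ j : Fin n, (j : ℕ) = (i : ℕ) + 1 → gap ≤ |β j - α i|) :
    Real.sqrt (1 - (∑ j, a i j * b i j) ^ 2) ≤ c / gap := by
  have hc0 : 0 ≤ c := le_trans (norm_nonneg _) hAB
  rcases le_or_gt gap c with hcg | hcg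
  · -- trivial case
    calc Real.sqrt (1 - (∑ j, a i j * b i j) ^ 2) ≤ Real.sqrt 1 :=
          Real.sqrt_le_sqrt (by nlinarith [sq_nonneg (∑ j, a i j * b i j)])
    _ = 1 := Real.sqrt_one
    _ ≤ c / gap := (one_le_div hgap).mpr hcg
  -- main case : c < gap
  set u : EuclideanSpace ℝ (Fin n) := (WithLp.equiv 2 (Fin n → ℝ)).symm (a i) with hu_def
  set v : EuclideanSpace ℝ (Fin n) := (WithLp.equiv 2 (Fin n → ℝ)).symm (b i) with hv_def
  have hipuv : ⟪u, v⟫ = ∑ j, a i j * b i j := by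
    simp [PiLp.inner_apply, hu_def, hv_def, RCLike.inner_apply]; exact Finset.sum_congr rfl (fun j _ => mul_comm _ _)
  have hun : ‖u‖ ^ 2 = 1 := by
    rw [← real_inner_self_eq_norm_sq]
    rw [show ⟪u, u⟫ = ∑ j, a i j * a i j by simp [PiLp.inner_apply, hu_def]; rw [EuclideanSpace.norm_sq_eq]; simp [sq]]
    rw [← hanorm i]; congr 1; ext j; ring
  have hvn : ‖v‖ ^ 2 = 1 := by
    rw [← real_inner_self_eq_norm_sq]
    rw [show ⟪v, v⟫ = ∑ j, b i j * b i j by simp [PiLp.inner_apply, hv_def]; rw [EuclideanSpace.norm_sq_eq]; simp [sq]]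
    rw [← hbnorm i]; congr 1; ext j; ring
  have hu_eig : Matrix.toEuclideanLin A u = α i • u := by
    apply (WithLp.equiv 2 (Fin n → ℝ)).injective
    ext j
    simpa [hu_def] using congrFun (ha i) j
  have hv_eig : Matrix.toEuclideanLin B v = β i • v := by
    apply (WithLp.equiv 2 (Fin n → ℝ)).injective
    ext j
    simpa [hv_def] using congrFun (hb i) j
  have hW : ∀ j, |α j - β j| ≤ c := fun j => (weyl A B hA hB α β hα hβ j).trans hAB
  obtain ⟨hαm, _⟩ := hα
  obtain ⟨hβm, σB, hσB⟩ := hβ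
  set zB := hB.eigenvectorBasis with hzB
  set ν := hB.eigenvalues with hν
  -- Claim 1 : eigenvalues of B other than the i-th are far from α i
  have hfar : ∀ j : Fin n, j ≠ i → gap ≤ |β j - α i| := by
    intro j hj
    rcases lt_or_gt_of_ne (fun h : (j:ℕ) = (i:ℕ) => hj (Fin.ext h)) with hji | hji
    · -- j < i
      have hi0 : 0 < (i:ℕ) := Nat.pos_of_ne_zero (by omega)
      set j' : Fin n := ⟨(i:ℕ) - 1, by omega⟩ with hj'
      have hg := hgap1 j' (by show (i:ℕ)-1+1 = (i:ℕ); omega)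
      have hW' := (abs_le.mp (hW j')).2
      have hαj' : α i ≤ α j' := hαm (by rw [Fin.le_def]; show (i:ℕ) - 1 ≤ (i:ℕ); omega)
      have hββ : β j' ≤ β j := hβm (by rw [Fin.le_def]; show (j:ℕ) ≤ (i:ℕ) - 1; omega)
      have hside : α i + gap ≤ β j' := by
        rcases le_or_gt (α i) (β j') with h | h
        · rw [abs_of_nonneg (by linarith)] at hg; linarith
        · exfalso; rw [abs_of_neg (by linarith)] at hg; linarith
      rw [abs_of_nonneg (by linarith)]; linarith
    · -- j > i
      have hilt : (i:ℕ) + 1 < n := by have := j.isLt; omega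
      set j' : Fin n := ⟨(i:ℕ) + 1, hilt⟩ with hj'
      have hg := hgap2 j' (by show (i:ℕ)+1 = (i:ℕ)+1; rfl)
      have hW' := (abs_le.mp (hW j')).1
      have hαj' : α j' ≤ α i := hαm (by rw [Fin.le_def]; show (i:ℕ) ≤ (i:ℕ) + 1; omega)
      have hββ : β j ≤ β j' := hβm (by rw [Fin.le_def]; show (i:ℕ) + 1 ≤ (j:ℕ); omega)
      have hside : β j' ≤ α i - gap := by
        rcases le_or_gt (β j') (α i) with h | h
        · rw [abs_of_nonpos (by linarith)] at hg; linarith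
        · exfalso; rw [abs_of_pos (by linarith)] at hg; linarith
      rw [abs_of_nonpos (by linarith)]; linarith
  have hclose : |β i - α i| ≤ c := by rw [abs_sub_comm]; exact hW i
  set k0 : Fin n := σB i with hk0
  have hνk0 : ν k0 = β i := (congrFun hσB i).symm
  have hfark : ∀ k : Fin n, k ≠ k0 → gap ≤ |ν k - α i| := by
    intro k hk
    have hm : σB (σB.symm k) = k := σB.apply_symm_apply k
    have hmne : σB.symm k ≠ i := fun h => hk (by rw [← hm, h])
    have : β (σB.symm k) = ν k := by rw [congrFun hσB (σB.symm k)]; simp [hm]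
    rw [← this]
    exact hfar _ hmne
  have hνne : ∀ k : Fin n, k ≠ k0 → ν k ≠ β i := by
    intro k hk h
    have h1 := hfark k hk
    rw [h] at h1
    have h2 := h1.trans hclose
    linarith
  have hcv : ∀ k : Fin n, k ≠ k0 → ⟪zB k, v⟫ = 0 := by
    intro k hk
    have h1 : ν k * ⟪zB k, v⟫ = β i * ⟪zB k, v⟫ := by
      rw [← inner_mv B hB k v, hv_eig, real_inner_smul_right]
    have h2 : (ν k - β i) * ⟪zB k, v⟫ = 0 := by ring_nf; linarith [h1]
    rcases mul_eq_zero.mp h2 with h | h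
    · exact absurd (sub_eq_zero.mp h) (hνne k hk)
    · exact h
  have hip : ⟪u, v⟫ = ⟪u, zB k0⟫ * ⟪zB k0, v⟫ := by
    rw [← zB.sum_inner_mul_inner u v]
    exact Finset.sum_eq_single k0 (fun k _ hk => by rw [hcv k hk, mul_zero])
      (fun h => absurd (Finset.mem_univ k0) h)
  have hcv2 : ⟪zB k0, v⟫ ^ 2 = 1 := by
    have hps := parseval zB v
    rw [hvn] at hps
    rw [← hps]
    exact (Finset.sum_eq_single (f := fun k => ⟪zB k, v⟫ ^ 2) k0
      (fun k _ hk => by show ⟪zB k, v⟫ ^ 2 = 0; rw [hcv k hk]; ring)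
      (fun h => absurd (Finset.mem_univ k0) h)).symm
  have hip2 : ⟪u, v⟫ ^ 2 = ⟪zB k0, u⟫ ^ 2 := by
    rw [hip, mul_pow, hcv2, mul_one, real_inner_comm]
  -- the perturbation vector
  set w : EuclideanSpace ℝ (Fin n) := Matrix.toEuclideanLin (B - A) u with hw_def
  have hwk : ∀ k : Fin n, ⟪zB k, w⟫ = (ν k - α i) * ⟪zB k, u⟫ := by
    intro k
    have : w = Matrix.toEuclideanLin B u - α i • u := by
      rw [hw_def, map_sub, LinearMap.sub_apply, hu_eig]
    rw [this, inner_sub_right, inner_mv B hB k u, real_inner_smul_right]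
    ring
  have hwn : ‖w‖ ≤ c := by
    calc ‖w‖ ≤ opNorm (B - A) * ‖u‖ := norm_mv_le _ _
    _ = opNorm (A - B) * ‖u‖ := by rw [opNorm_sub_comm]
    _ ≤ c * 1 := by
        apply mul_le_mul hAB _ (norm_nonneg _) hc0
        nlinarith [norm_nonneg u]
    _ = c := mul_one c
  -- key estimate
  have hups : ∑ k, ⟪zB k, u⟫ ^ 2 = 1 := by rw [parseval zB u, hun]
  have hsum_erase : ∑ k ∈ Finset.univ.erase k0, ⟪zB k, u⟫ ^ 2 = 1 - ⟪u, v⟫ ^ 2 := by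
    have := Finset.sum_erase_add Finset.univ (fun k => ⟪zB k, u⟫ ^ 2) (Finset.mem_univ k0)
    rw [hups] at this
    rw [hip2]
    linarith
  have hkey : gap ^ 2 * (1 - ⟪u, v⟫ ^ 2) ≤ c ^ 2 := by
    rw [← hsum_erase, Finset.mul_sum]
    calc ∑ k ∈ Finset.univ.erase k0, gap ^ 2 * ⟪zB k, u⟫ ^ 2
        ≤ ∑ k ∈ Finset.univ.erase k0, (ν k - α i) ^ 2 * ⟪zB k, u⟫ ^ 2 := by
          apply Finset.sum_le_sum
          intro k hk
          apply mul_le_mul_of_nonneg_right _ (sq_nonneg _)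
          have := hfark k (Finset.ne_of_mem_erase hk)
          calc gap ^ 2 ≤ |ν k - α i| ^ 2 := by
                apply pow_le_pow_left₀ hgap.le this
          _ = (ν k - α i) ^ 2 := sq_abs _
    _ ≤ ∑ k, (ν k - α i) ^ 2 * ⟪zB k, u⟫ ^ 2 := by
          apply Finset.sum_le_sum_of_subset_of_nonneg (Finset.subset_univ _)
          intro k _ _
          positivity
    _ = ∑ k, ⟪zB k, w⟫ ^ 2 := by
          congr 1; ext k; rw [hwk]; ring
    _ = ‖w‖ ^ 2 := parseval zB w
    _ ≤ c ^ 2 := pow_le_pow_left₀ (norm_nonneg _) hwn 2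
  have hfin : 1 - ⟪u, v⟫ ^ 2 ≤ (c / gap) ^ 2 := by
    rw [div_pow, le_div_iff₀ (by positivity)]
    linarith [hkey]
  rw [← hipuv]
  calc Real.sqrt (1 - ⟪u, v⟫ ^ 2) ≤ Real.sqrt ((c / gap) ^ 2) := Real.sqrt_le_sqrt hfin
  _ = c / gap := Real.sqrt_sq (by positivity)
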